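/- Let (V,Ω) be a 2n-dimensional symplectic vector space with compatible complex structure j, and let S be an antisymmetric bilinear form with S(jX,jY) = -S(X,Y). Define R(S,j)(X,Y) ∈ End(V) by Ω(R(S,j)(X,Y)Z,T) = -2Ω(Z,jT)S(X,jY) + Ω(X,jZ)S(Y,jT) + Ω(X,jT)S(Y,jZ) - Ω(Y,jT)S(X,jZ) - Ω(Y,jZ)S(X,jT). Then R(S,j) is Ricci-flat: Tr(Z ↦ R(S,j)(X,Z)Y) = 0 for all X, Y ∈ V. -/

import Mathlib

open LinearMap

private lemma trace_smulRight'' {V : Type*} [AddCommGroup V] [Module ℝ V]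
    [FiniteDimensional ℝ V] (φ : V →ₗ[ℝ] ℝ) (v : V) :
    LinearMap.trace ℝ V (φ.smulRight v) = φ v := by
  have h : φ.smulRight v = dualTensorHom ℝ V V (φ ⊗ₜ[ℝ] v) := by
    ext x; simp [dualTensorHom_apply]
  rw [h, LinearMap.trace_eq_contract_apply]
  simp

/-- The symplectic Weyl-type tensor `R(S,j)` built from an
antisymmetric bilinear form `S` with `S(jX,jY) = -S(X,Y)` is Ricci-flat:
`Tr(Z ↦ R(S,j)(X,Z)Y) = 0` for all `X, Y`. -/
theorem symplectic_RSj_ricci_flat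
    (V : Type*) [AddCommGroup V] [Module ℝ V] [FiniteDimensional ℝ V]
    (n : ℕ) (hdim : Module.finrank ℝ V = 2 * n)
    (Ω : V →ₗ[ℝ] V →ₗ[ℝ] ℝ)
    (hnd : ∀ X : V, (∀ Y : V, Ω X Y = 0) → X = 0)
    (hΩanti : ∀ X Y : V, Ω X Y = -Ω Y X)
    (j : V →ₗ[ℝ] V) (hj : j ∘ₗ j = -LinearMap.id)
    (hcompat : ∀ X Y : V, Ω (j X) (j Y) = Ω X Y)
    (S : V →ₗ[ℝ] V →ₗ[ℝ] ℝ)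
    (hSanti : ∀ X Y : V, S X Y = -S Y X)
    (hSj : ∀ X Y : V, S (j X) (j Y) = -S X Y)
    (R : V →ₗ[ℝ] V →ₗ[ℝ] V →ₗ[ℝ] V)
    (hR : ∀ X Y Z T : V, Ω (R X Y Z) T
      = -2 * Ω Z (j T) * S X (j Y) + Ω X (j Z) * S Y (j T)
        + Ω X (j T) * S Y (j Z) - Ω Y (j T) * S X (j Z)
        - Ω Y (j Z) * S X (j T)) :
    ∀ X Y : V, LinearMap.trace ℝ V ((R X).flip Y) = 0 := by
  -- basic consequences
  have hjj : ∀ v : V, j (j v) = -v := by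
    intro v
    have := LinearMap.ext_iff.mp hj v
    simpa using this
  have hΩj : ∀ a b : V, Ω (j a) b = -Ω a (j b) := by
    intro a b
    have h1 : Ω (j a) (j (j b)) = Ω a (j b) := hcompat a (j b)
    rw [hjj b] at h1
    have h2 : -(Ω (j a)) b = Ω a (j b) := by simpa using h1
    linarith
  -- Ω as a linear equivalence onto the dual
  have hinj : Function.Injective Ω := by
    intro a b hab
    have h0 : a - b = 0 := by
      apply hnd
      intro Yv
      rw [map_sub]
      simp [hab]
    exact sub_eq_zero.mp h0
  have hsurj : Function.Surjective Ω :=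
    (LinearMap.injective_iff_surjective_of_finrank_eq_finrank
      (Subspace.dual_finrank_eq).symm).mp hinj
  let e : V ≃ₗ[ℝ] Module.Dual ℝ V := LinearEquiv.ofBijective Ω ⟨hinj, hsurj⟩
  have heval : ∀ (w : Module.Dual ℝ V) (T : V), Ω (e.symm w) T = w T := by
    intro w T
    have h : e (e.symm w) = w := e.apply_symm_apply w
    exact congrFun (congrArg (fun f : Module.Dual ℝ V => (f : V → ℝ)) h) T
  -- trace of j is zero
  have htrj : LinearMap.trace ℝ V j = 0 := by
    have hconj : j = e.symm.conj (-(Module.Dual.transpose (R := ℝ) j)) := by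
      ext Z
      apply hinj
      ext T
      rw [LinearEquiv.conj_apply]
      simp only [coe_comp, Function.comp_apply, LinearEquiv.coe_coe, LinearEquiv.symm_symm]
      rw [heval]
      simp only [LinearMap.neg_apply, Module.Dual.transpose_apply, LinearMap.comp_apply]
      rw [hΩj]
      rfl
    have h1 : LinearMap.trace ℝ V j = -LinearMap.trace ℝ V j := by
      conv_lhs => rw [hconj]
      rw [LinearMap.trace_conj',
        map_neg (LinearMap.trace ℝ (Module.Dual ℝ V)) (Module.Dual.transpose (R := ℝ) j),
        LinearMap.trace_transpose']
    linarith
  -- the operator g with Ω (g Z) T = S Z (j T), and its vanishing trace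
  set g : V →ₗ[ℝ] V := e.symm.toLinearMap ∘ₗ (S.compl₂ j) with hgdef
  have hgΩ : ∀ Z T : V, Ω (g Z) T = S Z (j T) := by
    intro Z T
    rw [hgdef]
    simp only [coe_comp, Function.comp_apply, LinearEquiv.coe_coe]
    rw [heval]
    simp
  have hganti : ∀ Z : V, j (g (j Z)) = g Z := by
    intro Z
    apply hinj
    ext T
    rw [hΩj, hgΩ]
    have h1 : S (j Z) (j (j T)) = -S Z (j T) := hSj Z (j T)
    rw [h1, hgΩ]
    ring
  have htrg : LinearMap.trace ℝ V g = 0 := by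
    have hcomp : g = j ∘ₗ ((g ∘ₗ j)) := by
      ext Z
      simp only [coe_comp, Function.comp_apply]
      exact (hganti Z).symm
    have h1 : LinearMap.trace ℝ V g = -LinearMap.trace ℝ V g := by
      conv_lhs => rw [hcomp]
      rw [LinearMap.trace_comp_comm']
      have h2 : (g ∘ₗ j) ∘ₗ j = -g := by
        ext Z
        simp only [coe_comp, Function.comp_apply, LinearMap.neg_apply]
        rw [hjj, map_neg]
      rw [h2, map_neg]
    linarith
  -- main computation
  intro X Y
  set u : V := e.symm (-(((S X) ∘ₗ j))) with hudef
  have huΩ : ∀ T : V, Ω u T = -S X (j T) := by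
    intro T
    rw [hudef, heval]
    simp
  set f1 : V →ₗ[ℝ] V := ((S X) ∘ₗ j).smulRight ((2:ℝ) • j Y) with hf1
  set f2 : V →ₗ[ℝ] V := Ω X (j Y) • g with hf2
  set f3 : V →ₗ[ℝ] V := (S.flip (j Y)).smulRight (-(j X)) with hf3
  set f4 : V →ₗ[ℝ] V := S X (j Y) • j with hf4
  set f5 : V →ₗ[ℝ] V := (Ω.flip (j Y)).smulRight u with hf5
  have hdec : (R X).flip Y = f1 + f2 + f3 + f4 + f5 := by
    ext Z
    apply hinj
    ext T
    simp only [flip_apply, LinearMap.add_apply, map_add, LinearMap.add_apply]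
    rw [hR X Z Y T]
    have e1 : Ω (f1 Z) T = -2 * Ω Y (j T) * S X (j Z) := by
      rw [hf1]
      simp only [smulRight_apply, coe_comp, Function.comp_apply, map_smul, smul_eq_mul,
        LinearMap.smul_apply]
      rw [hΩj]
      ring
    have e2 : Ω (f2 Z) T = Ω X (j Y) * S Z (j T) := by
      rw [hf2]
      simp only [LinearMap.smul_apply, map_smul, smul_eq_mul]
      rw [hgΩ]
    have e3 : Ω (f3 Z) T = Ω X (j T) * S Z (j Y) := by
      rw [hf3]
      simp only [smulRight_apply, flip_apply, map_smul, map_neg, LinearMap.smul_apply,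
        LinearMap.neg_apply, smul_eq_mul]
      rw [hΩj]
      ring
    have e4 : Ω (f4 Z) T = -(Ω Z (j T)) * S X (j Y) := by
      rw [hf4]
      simp only [LinearMap.smul_apply, map_smul, smul_eq_mul]
      rw [hΩj]
      ring
    have e5 : Ω (f5 Z) T = -(Ω Z (j Y)) * S X (j T) := by
      rw [hf5]
      simp only [smulRight_apply, flip_apply, map_smul, LinearMap.smul_apply, smul_eq_mul]
      rw [huΩ]
      ring
    rw [e1, e2, e3, e4, e5]
    ring
  rw [hdec]
  simp only [map_add]
  have t1 : LinearMap.trace ℝ V f1 = -2 * S X Y := by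
    rw [hf1, trace_smulRight'']
    simp only [coe_comp, Function.comp_apply, map_smul, smul_eq_mul]
    rw [hjj]
    simp only [map_neg]
    ring
  have t2 : LinearMap.trace ℝ V f2 = 0 := by
    rw [hf2, map_smul, htrg, smul_zero]
  have t3 : LinearMap.trace ℝ V f3 = S X Y := by
    rw [hf3, trace_smulRight'']
    simp only [flip_apply, map_neg, LinearMap.neg_apply]
    rw [hSj]
    ring
  have t4 : LinearMap.trace ℝ V f4 = 0 := by
    rw [hf4, map_smul, htrj, smul_zero]
  have t5 : LinearMap.trace ℝ V f5 = S X Y := by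
    rw [hf5, trace_smulRight'']
    simp only [flip_apply]
    rw [huΩ, hjj]
    simp
  rw [t1, t2, t3, t4, t5]
  ring
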